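/- Let μ be a probability measure on a measurable space Ω, let A, B, C be measurable sets, and let r₁, r₂ ∈ [0,1] with r₁ < 1. If μ(A ∩ B) ≥ (1 − r₁)·μ(A) and μ(A ∩ C) ≥ (1 − r₂)·μ(A), then μ(A ∩ B ∩ C) ≥ (1 − r₂/(1 − r₁))·μ(A ∩ B). (This is the sharp inequality underlying the soundness of the cautious-monotonicity rule CM^q, from which the bound min(r₁+r₂,1) follows.) -/

import Mathlib

open MeasureTheory

/-- The sharp inequality underlying the soundness of CM^q. -/
theorem CMq_sharp {Ω : Type*} [MeasurableSpace Ω]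
    (μ : Measure Ω) [IsProbabilityMeasure μ] (A B C : Set Ω)
    (hA : MeasurableSet A) (hB : MeasurableSet B) (hC : MeasurableSet C)
    (r₁ r₂ : ℝ) (hr₁0 : 0 ≤ r₁) (hr₁1 : r₁ < 1) (hr₂0 : 0 ≤ r₂) (hr₂1 : r₂ ≤ 1)
    (h₁ : ENNReal.ofReal (1 - r₁) * μ A ≤ μ (A ∩ B))
    (h₂ : ENNReal.ofReal (1 - r₂) * μ A ≤ μ (A ∩ C)) :
    ENNReal.ofReal (1 - r₂ / (1 - r₁)) * μ (A ∩ B) ≤ μ (A ∩ B ∩ C) := by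
  by_cases hk : 1 - r₂ / (1 - r₁) ≤ 0
  · rw [ENNReal.ofReal_eq_zero.2 hk, zero_mul]; exact zero_le
  push_neg at hk
  set a := (μ A).toReal with ha
  set b := (μ (A ∩ B)).toReal with hb
  set c := (μ (A ∩ C)).toReal with hc
  set d := (μ (A ∩ B ∩ C)).toReal with hd
  have fa : μ A ≠ ⊤ := measure_ne_top μ A
  have fb : μ (A ∩ B) ≠ ⊤ := measure_ne_top μ _
  have fc : μ (A ∩ C) ≠ ⊤ := measure_ne_top μ _
  have fd : μ (A ∩ B ∩ C) ≠ ⊤ := measure_ne_top μ _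
  -- real versions of hypotheses
  have H1 : (1 - r₁) * a ≤ b := by
    have := ENNReal.toReal_mono fb h₁
    rwa [ENNReal.toReal_mul, ENNReal.toReal_ofReal (by linarith)] at this
  have H2 : (1 - r₂) * a ≤ c := by
    have := ENNReal.toReal_mono fc h₂
    rwa [ENNReal.toReal_mul, ENNReal.toReal_ofReal (by linarith)] at this
  have Hba : b ≤ a := ENNReal.toReal_mono fa (measure_mono Set.inter_subset_left)
  have Hie : b + c ≤ d + a := by
    have h := measure_union_add_inter (μ := μ) (A ∩ B) (hA.inter hC)
    have hu : μ ((A ∩ B) ∪ (A ∩ C)) ≤ μ A := measure_mono (by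
      intro x hx; rcases hx with h | h <;> exact h.1)
    have hi : (A ∩ B) ∩ (A ∩ C) = A ∩ B ∩ C := by
      ext x; simp [Set.mem_inter_iff]; tauto
    have : μ (A ∩ B) + μ (A ∩ C) ≤ μ (A ∩ B ∩ C) + μ A := by
      calc μ (A ∩ B) + μ (A ∩ C) = μ ((A ∩ B) ∪ (A ∩ C)) + μ ((A ∩ B) ∩ (A ∩ C)) := h.symm
        _ ≤ μ A + μ (A ∩ B ∩ C) := by rw [hi]; exact add_le_add hu le_rfl
        _ = μ (A ∩ B ∩ C) + μ A := add_comm _ _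
    have := ENNReal.toReal_mono (by finiteness) this
    rwa [ENNReal.toReal_add fb fc, ENNReal.toReal_add fd fa] at this
  -- reduce goal to reals
  rw [← ENNReal.ofReal_toReal fb, ← ENNReal.ofReal_toReal fd, ← ENNReal.ofReal_mul (le_of_lt hk)]
  apply ENNReal.ofReal_le_ofReal
  have ht : (0:ℝ) < 1 - r₁ := by linarith
  have key : r₂ / (1 - r₁) * b ≥ r₂ * a := by
    rw [div_mul_eq_mul_div, ge_iff_le, le_div_iff₀ ht]
    nlinarith
  nlinarith
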